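/- Let d ∈ (0,1), l > 0, let F ∈ SR_d^{⌊l+d⌋+2}(0+), set f = F^{(0,1)}, let g : [0,∞) → ℝ be càdlàg, let t ∈ (0,1), let ε ∈ (0,l), and let P be a polynomial of degree at most ⌊l⌋ such that |g(r) − P(r)| ≤ C₀|r−t|^{l−ε} for all r ∈ [0,1] and some C₀ > 0. Then for every h ∈ (0,t) there exist a polynomial P³ of degree at most ⌊l+d⌋ and constants C > 0, h' > 0 such that |∫₀^{t−h} (f(u,r) − f(v,r))[g(r) − P(r)]dr − P³(u) + P³(v)| ≤ C·F(u,v)·(|u−t|^{l−ε} + |v−t|^{l−ε}) for all u,v ∈ B(t,h') with v < u. -/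

import Mathlib

open Set Filter MeasureTheory intervalIntegral Polynomial Metric
open scoped Topology

noncomputable section

/-- Mixed partial derivative `F^{(n,m)}`: `n` derivatives in the first (time) variable
and `m` derivatives in the second variable. -/
noncomputable def pderiv2 (n m : ℕ) (F : ℝ → ℝ → ℝ) : ℝ → ℝ → ℝ :=
  fun s r => iteratedDeriv m (fun r' => iteratedDeriv n (fun s' => F s' r') s) r

/-- The closed half-plane `E = {(s,r) : r ≤ s}`. -/
def Ebar : Set (ℝ × ℝ) := {p | p.2 ≤ p.1}

/-- The open half-plane `Ẽ = {(s,r) : r < s}`. -/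
def Etil : Set (ℝ × ℝ) := {p | p.2 < p.1}

/-- Membership in `C₊^{(k)}(E)` : continuous on `E`, `k` times continuously
differentiable on `Ẽ`, and strictly positive on `Ẽ`. -/
structure CPlus (k : ℕ) (F : ℝ → ℝ → ℝ) : Prop where
  cont : ContinuousOn (fun p : ℝ × ℝ => F p.1 p.2) Ebar
  smooth : ContDiffOn ℝ k (fun p : ℝ × ℝ => F p.1 p.2) Etil
  pos : ∀ p ∈ Etil, 0 < F p.1 p.2

/-- `F` is a function of smooth variation of index `(ρ, k)` at the diagonal,
i.e. `F ∈ SR_ρ^k(0+)`. -/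
structure SmoothVariation (ρ : ℝ) (k : ℕ) (F : ℝ → ℝ → ℝ) : Prop where
  mem : CPlus k F
  condA : ∀ K : Set ℝ, IsCompact K → ∀ ε > 0, ∃ h₀ > 0, ∀ h : ℝ, 0 < h → h < h₀ →
    ∀ t ∈ K, |h * pderiv2 0 1 F t (t - h) / F t (t - h) + ρ| < ε
  condB : ∀ K : Set ℝ, IsCompact K → ∀ ε > 0, ∃ h₀ > 0, ∀ h : ℝ, 0 < h → h < h₀ →
    ∀ t ∈ K, |h * pderiv2 1 0 F (t + h) t / F (t + h) t - ρ| < ε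
  condC : ∀ j : ℕ, 2 ≤ j → j ≤ k → ∀ K : Set ℝ, IsCompact K → ∀ ε > 0, ∃ h₀ > 0,
    ∀ h : ℝ, 0 < h → h < h₀ → ∀ t ∈ K,
      |h ^ j * pderiv2 (j - 1) 1 F t (t - h) / F t (t - h)
        + ∏ i ∈ Finset.range j, (ρ - (i : ℝ))| < ε
  condD : ∀ K : Set ℝ, IsCompact K → ∀ ε > 0, ∃ h₀ > 0, ∀ h : ℝ, 0 < h → h < h₀ →
    ∀ t ∈ K, |h ^ 2 * pderiv2 0 2 F t (t - h) / F t (t - h) - ρ * (ρ - 1)| < ε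

/-- The 2-microlocal space with gauge function `F`, `C_F^{d,s'}(t₀)`. -/
def MemCF (F : ℝ → ℝ → ℝ) (d s' t₀ : ℝ) (g : ℝ → ℝ) : Prop :=
  ∃ C > 0, ∃ h > 0, ∃ P : Polynomial ℝ, (P.natDegree : ℤ) ≤ ⌊d - s'⌋ ∧
    ∀ u v : ℝ, u ∈ Metric.ball t₀ h → v ∈ Metric.ball t₀ h → v ≤ u →
      |(g u - P.eval u) - (g v - P.eval v)| ≤
        C * F u v * (|u - t₀| + |v - t₀|) ^ (-s')

/-- The classical 2-microlocal space `C^{σ,s'}(t₀)`. -/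
def MemC2ML (σ s' t₀ : ℝ) (g : ℝ → ℝ) : Prop :=
  ∃ C > 0, ∃ h > 0, ∃ P : Polynomial ℝ, (P.natDegree : ℤ) ≤ ⌊σ - s'⌋ ∧
    ∀ u v : ℝ, u ∈ Metric.ball t₀ h → v ∈ Metric.ball t₀ h →
      |(g u - P.eval u) - (g v - P.eval v)| ≤
        C * |u - v| ^ σ * (|u - t₀| + |v - t₀|) ^ (-s')

/-- The pointwise Hölder space `C^l(t₀)`. -/
def PtwHolder (l t₀ : ℝ) (g : ℝ → ℝ) : Prop :=
  ∃ C > 0, ∃ h > 0, ∃ P : Polynomial ℝ, (P.natDegree : ℤ) ≤ ⌊l⌋ ∧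
    ∀ t ∈ Metric.ball t₀ h, |g t - P.eval t| ≤ C * |t - t₀| ^ l

/-- The pointwise Hölder exponent `h_g(t₀) = sup{l : g ∈ C^l(t₀)}`. -/
def holderExp (g : ℝ → ℝ) (t₀ : ℝ) : ℝ := sSup {l | PtwHolder l t₀ g}

/-- The Hölder exponent with gauge function `F`,
`h̄^d_g(t₀) = d − inf{s' ≤ 0 : g ∈ C_F^{d,s'}(t₀)}`. -/
def holderGaugeExp (F : ℝ → ℝ → ℝ) (d : ℝ) (g : ℝ → ℝ) (t₀ : ℝ) : ℝ :=
  d - sInf {s' | s' ≤ 0 ∧ MemCF F d s' t₀ g}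

/-- The 2-microlocal frontier `σ_{g,t₀}(s') = sup{σ ∈ [0,1) : g ∈ C^{σ,s'}(t₀)}`. -/
def frontier2ML (g : ℝ → ℝ) (t₀ s' : ℝ) : ℝ :=
  sSup {σ | σ ∈ Set.Ico (0:ℝ) 1 ∧ MemC2ML σ s' t₀ g}

/-- `g` is càdlàg on `[0,∞)`: right-continuous with left limits. -/
def CadlagOn (g : ℝ → ℝ) : Prop :=
  (∀ t : ℝ, 0 ≤ t → Tendsto g (𝓝[Set.Ici t] t) (𝓝 (g t))) ∧
  (∀ t : ℝ, 0 < t → ∃ L : ℝ, Tendsto g (𝓝[Set.Iio t] t) (𝓝 L))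

lemma cadlag_measurable (g : ℝ → ℝ) (hg : CadlagOn g) :
    Measurable fun x : ℝ => g (max x 0) := by
  set G0 : ℝ → ℝ := fun x => g (max x 0) with hG0
  have hrc : ∀ x : ℝ, Tendsto G0 (𝓝[Set.Ici x] x) (𝓝 (G0 x)) := by
    intro x
    rcases le_or_gt 0 x with hx | hx
    · have h1 : Tendsto g (𝓝[Set.Ici x] x) (𝓝 (g x)) := hg.1 x hx
      have heq : ∀ᶠ y in 𝓝[Set.Ici x] x, g y = G0 y := by
        filter_upwards [self_mem_nhdsWithin] with y hy
        simp [hG0, max_eq_left (le_trans hx hy)]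
      simpa [hG0, max_eq_left hx] using h1.congr' heq
    · have heq : ∀ᶠ y in 𝓝[Set.Ici x] x, G0 x = G0 y := by
        filter_upwards [Ico_mem_nhdsGE_of_mem ⟨le_refl x, hx⟩] with y hy
        simp [hG0, max_eq_right (le_of_lt hx), max_eq_right (le_of_lt hy.2)]
      exact tendsto_const_nhds.congr' heq
  have key : ∀ x : ℝ, Tendsto (fun n : ℕ => G0 ((⌈(2:ℝ)^n * x⌉ : ℝ) / 2^n)) atTop (𝓝 (G0 x)) := by
    intro x
    apply (hrc x).comp
    apply tendsto_nhdsWithin_of_tendsto_nhds_of_eventually_within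
    · have hle : ∀ n : ℕ, x ≤ (⌈(2:ℝ)^n * x⌉ : ℝ) / 2^n := by
        intro n
        rw [le_div_iff₀ (by positivity)]
        calc x * 2^n = 2^n * x := by ring
        _ ≤ _ := Int.le_ceil _
      have hlt : ∀ n : ℕ, (⌈(2:ℝ)^n * x⌉ : ℝ) / 2^n ≤ x + (1/2)^n := by
        intro n
        rw [div_le_iff₀ (by positivity)]
        have := (Int.ceil_lt_add_one ((2:ℝ)^n * x)).le
        calc (⌈(2:ℝ)^n * x⌉ : ℝ) ≤ 2^n * x + 1 := this
        _ = (x + (1/2)^n) * 2^n := by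
              have h2 : ((1:ℝ)/2)^n * 2^n = 1 := by rw [← mul_pow]; norm_num
              rw [add_mul, h2]; ring
      apply tendsto_of_tendsto_of_tendsto_of_le_of_le (g := fun _ : ℕ => x)
        (h := fun n : ℕ => x + (1/2)^n) tendsto_const_nhds ?_ hle hlt
      have : Tendsto (fun n : ℕ => (1/2:ℝ)^n) atTop (𝓝 0) := by
        apply tendsto_pow_atTop_nhds_zero_of_lt_one <;> norm_num
      simpa using tendsto_const_nhds.add this
    · filter_upwards with n
      rw [Set.mem_Ici, le_div_iff₀ (by positivity)]
      calc x * 2^n = 2^n * x := by ring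
      _ ≤ _ := Int.le_ceil _
  apply measurable_of_tendsto_metrizable (f := fun n x => G0 ((⌈(2:ℝ)^n * x⌉ : ℝ) / 2^n))
  · intro n
    have m1 : Measurable fun x : ℝ => (⌈(2:ℝ)^n * x⌉ : ℤ) :=
      Int.measurable_ceil.comp (measurable_id.const_mul _)
    exact (measurable_from_top (f := fun k : ℤ => G0 ((k:ℝ)/2^n))).comp m1
  · exact tendsto_pi_nhds.2 key
lemma mvt_two {t δ u v : ℝ} {f f' : ℝ → ℝ} {C : ℝ}
    (hu : u ∈ Metric.ball t δ) (hv : v ∈ Metric.ball t δ)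
    (hd : ∀ y ∈ Metric.ball t δ, HasDerivAt f (f' y) y)
    (hb : ∀ y ∈ Metric.ball t δ, |y - t| ≤ max |u - t| |v - t| → |f' y| ≤ C) :
    |f u - f v| ≤ C * |u - v| := by
  set s : Set ℝ := Metric.closedBall t (max |u - t| |v - t|) ∩ Metric.ball t δ with hs
  have hconv : Convex ℝ s := (convex_closedBall _ _).inter (convex_ball _ _)
  have h1 : ∀ y ∈ s, HasDerivWithinAt f (f' y) s y := fun y hy => (hd y hy.2).hasDerivWithinAt
  have h2 : ∀ y ∈ s, ‖f' y‖ ≤ C := by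
    intro y hy
    rw [Real.norm_eq_abs]
    exact hb y hy.2 (by simpa [Real.dist_eq] using hy.1)
  have hus : u ∈ s := ⟨by simp [Metric.mem_closedBall, Real.dist_eq, le_max_left], hu⟩
  have hvs : v ∈ s := ⟨by simp [Metric.mem_closedBall, Real.dist_eq, le_max_right], hv⟩
  simpa [Real.norm_eq_abs] using
    hconv.norm_image_sub_le_of_norm_hasDerivWithin_le h1 h2 hvs hus
lemma pderiv2_01 (F : ℝ → ℝ → ℝ) (s r : ℝ) :
    pderiv2 0 1 F s r = deriv (fun r' => F s r') r := by
  simp [pderiv2, iteratedDeriv_one, iteratedDeriv_zero]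

lemma isOpen_Etil : IsOpen Etil := isOpen_lt continuous_snd continuous_fst

set_option maxHeartbeats 1000000 in
lemma F_lowerbound (d : ℝ) (k : ℕ) (hk : 1 ≤ k) (F : ℝ → ℝ → ℝ)
    (hF : SmoothVariation d k F) (t d' : ℝ) (hd' : d < d') :
    ∃ c > 0, ∃ h' > 0, h' ≤ 1 ∧
      ∀ u v : ℝ, u ∈ Metric.ball t h' → v ∈ Metric.ball t h' → v < u →
        c * (u - v) ^ d' ≤ F u v := by
  classical
  obtain ⟨h₀, hh₀, hA⟩ := hF.condA (Set.Icc (t-1) (t+1)) isCompact_Icc (d' - d) (by linarith)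
  set G2 : ℝ × ℝ → ℝ := fun p => F p.1 p.2 with hG2
  have hcont : ContinuousOn G2 Etil := hF.mem.smooth.continuousOn
  have hder : ∀ x s : ℝ, s < x →
      HasDerivAt (fun s' => F x s') (pderiv2 0 1 F x s) s := by
    intro x s hxs
    have hmem : ((x, s) : ℝ × ℝ) ∈ Etil := hxs
    have hat : DifferentiableAt ℝ G2 (x, s) :=
      (hF.mem.smooth.differentiableOn (by exact_mod_cast (Nat.one_le_iff_ne_zero.1 hk))).differentiableAt
        (isOpen_Etil.mem_nhds hmem)
    have hcomp : HasDerivAt (fun s' => F x s') ((fderiv ℝ G2 (x, s)) (0, 1)) s := by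
      have h1 : HasDerivAt (fun s' : ℝ => ((x, s') : ℝ × ℝ)) (0, 1) s :=
        (hasDerivAt_const s x).prodMk (hasDerivAt_id s)
      exact hat.hasFDerivAt.comp_hasDerivAt s h1
    rw [pderiv2_01, hcomp.deriv]; exact hcomp
  set β := min h₀ 1 / 2 with hβdef
  have hβpos : 0 < β := by positivity
  have hβlt : β < h₀ := by
    have : min h₀ 1 ≤ h₀ := min_le_left _ _
    have := hh₀; simp only [hβdef]; linarith
  have hβle1 : β ≤ 1 := by
    have : min h₀ 1 ≤ 1 := min_le_right _ _
    simp only [hβdef]; linarith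
  set h₁ := min 1 (β / 2) with hh₁def
  have hh₁pos : 0 < h₁ := by positivity
  have hh₁le1 : h₁ ≤ 1 := min_le_left _ _
  have hh₁leβ : h₁ ≤ β / 2 := min_le_right _ _
  -- minimum of u ↦ F u (u - β) on the closed ball
  have hmap : ∀ u ∈ Metric.closedBall t h₁, ((u, u - β) : ℝ × ℝ) ∈ Etil := by
    intro u _; show u - β < u; linarith
  have hφ : ContinuousOn (fun u => F u (u - β)) (Metric.closedBall t h₁) := by
    have hc : Continuous fun u : ℝ => ((u, u - β) : ℝ × ℝ) :=
      continuous_id.prodMk (continuous_id.sub continuous_const)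
    exact hcont.comp hc.continuousOn hmap
  obtain ⟨x₀, hx₀, hmin⟩ := (isCompact_closedBall t h₁).exists_isMinOn
    ⟨t, Metric.mem_closedBall_self (le_of_lt hh₁pos)⟩ hφ
  have hc₀ : 0 < F x₀ (x₀ - β) := hF.mem.pos _ (hmap x₀ hx₀)
  refine ⟨F x₀ (x₀ - β) / β ^ d', by positivity, h₁, hh₁pos, hh₁le1, ?_⟩
  intro u v hu hv hvu
  have hut : |u - t| < h₁ := by simpa [Real.dist_eq] using hu
  have hvt : |v - t| < h₁ := by simpa [Real.dist_eq] using hv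
  have huv : u - v < β := by
    have h1 := abs_lt.1 hut; have h2 := abs_lt.1 hvt
    have : h₁ ≤ β / 2 := hh₁leβ
    linarith
  have hvpos : u - β < v := by linarith
  have hFuv : 0 < F u v := hF.mem.pos (u, v) hvu
  -- monotone comparison function
  set G : ℝ → ℝ := fun s => Real.log (F u s) - d' * Real.log (u - s) with hGdef
  have hsublt : ∀ s ∈ Set.Icc (u - β) v, s < u := fun s hs => lt_of_le_of_lt hs.2 hvu
  have hFpos : ∀ s ∈ Set.Icc (u - β) v, 0 < F u s := fun s hs =>
    hF.mem.pos (u, s) (hsublt s hs)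
  have hGcont : ContinuousOn G (Set.Icc (u - β) v) := by
    have hc1 : ContinuousOn (fun s => F u s) (Set.Icc (u - β) v) := by
      have hc : Continuous fun s : ℝ => ((u, s) : ℝ × ℝ) :=
      continuous_const.prodMk continuous_id
      exact hcont.comp hc.continuousOn (fun s hs => hsublt s hs)
    have hc2 : ContinuousOn (fun s => Real.log (F u s)) (Set.Icc (u - β) v) :=
      hc1.log (fun s hs => ne_of_gt (hFpos s hs))
    have hc3 : ContinuousOn (fun s : ℝ => Real.log (u - s)) (Set.Icc (u - β) v) := by
      apply ContinuousOn.log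
      · exact (continuous_const.sub continuous_id).continuousOn
      · intro s hs
        have h5 := hsublt s hs
        have : (0:ℝ) < u - s := by linarith
        exact ne_of_gt this
    exact hc2.sub (continuousOn_const.mul hc3)
  have hG' : ∀ s ∈ Set.Ioo (u - β) v, HasDerivAt G
      (pderiv2 0 1 F u s / F u s - d' * (-1 / (u - s))) s := by
    intro s hs
    have hsu : s < u := lt_trans hs.2 hvu
    have hFs : 0 < F u s := hF.mem.pos (u, s) hsu
    have h1 : HasDerivAt (fun s' => Real.log (F u s'))
        (pderiv2 0 1 F u s / F u s) s := (hder u s hsu).log (ne_of_gt hFs)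
    have h2 : HasDerivAt (fun s' : ℝ => Real.log (u - s')) (-1 / (u - s)) s := by
      have h3 : HasDerivAt (fun s' : ℝ => u - s') (-1) s := by
        exact (hasDerivAt_id s).const_sub u
      exact h3.log (ne_of_gt (by linarith))
    exact h1.sub (h2.const_mul d')
  have hG'nonneg : ∀ s ∈ Set.Ioo (u - β) v,
      0 ≤ pderiv2 0 1 F u s / F u s - d' * (-1 / (u - s)) := by
    intro s hs
    have hsu : 0 < u - s := by have := lt_trans hs.2 hvu; linarith
    have hsh₀ : u - s < h₀ := by have := hs.1; linarith
    have huK : u ∈ Set.Icc (t - 1) (t + 1) := by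
      have := abs_lt.1 hut; constructor <;> linarith
    have hAu := hA (u - s) hsu hsh₀ u huK
    rw [show u - (u - s) = s by ring] at hAu
    have hlow := (abs_lt.1 hAu).1
    set q := pderiv2 0 1 F u s / F u s with hq
    have hq1 : (u - s) * pderiv2 0 1 F u s / F u s = (u - s) * q := by
      rw [hq]; ring
    rw [hq1] at hlow
    have hkey : 0 < (u - s) * q + d' := by linarith
    have : 0 < ((u - s) * q + d') / (u - s) := div_pos hkey hsu
    have heq : ((u - s) * q + d') / (u - s) = q - d' * (-1 / (u - s)) := by
      field_simp; ring
    linarith [heq ▸ this]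
  have hmono : MonotoneOn G (Set.Icc (u - β) v) := by
    apply monotoneOn_of_deriv_nonneg (convex_Icc _ _) hGcont
    · intro s hs
      rw [interior_Icc] at hs
      exact (hG' s hs).differentiableAt.differentiableWithinAt
    · intro s hs
      rw [interior_Icc] at hs
      rw [(hG' s hs).deriv]
      exact hG'nonneg s hs
  have hGle : G (u - β) ≤ G v :=
    hmono ⟨le_rfl, by linarith⟩ ⟨by linarith, le_rfl⟩ (by linarith)
  have hchain : Real.log (F u (u - β)) - d' * Real.log β ≤
      Real.log (F u v) - d' * Real.log (u - v) := by
    have : u - (u - β) = β := by ring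
    simpa [hGdef, this] using hGle
  have huKc : u ∈ Metric.closedBall t h₁ := Metric.ball_subset_closedBall hu
  have hlogc : Real.log (F x₀ (x₀ - β)) ≤ Real.log (F u (u - β)) :=
    Real.log_le_log hc₀ (isMinOn_iff.1 hmin u huKc)
  have huvpos : (0:ℝ) < u - v := by linarith
  rw [← Real.exp_log (show (0:ℝ) < F x₀ (x₀ - β) / β ^ d' * (u - v) ^ d' by positivity),
    ← Real.exp_log hFuv]
  apply Real.exp_le_exp.2
  rw [Real.log_mul (by positivity) (by positivity),
    Real.log_div (by positivity) (by positivity),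
    Real.log_rpow hβpos, Real.log_rpow huvpos]
  linarith
noncomputable def Dfam (F : ℝ → ℝ → ℝ) : ℕ → ℝ × ℝ → ℝ
  | 0 => fun p => fderiv ℝ (fun q : ℝ × ℝ => F q.1 q.2) p (0, 1)
  | (j+1) => fun p => fderiv ℝ (Dfam F j) p (1, 0)

lemma Dfam_contDiffOn {k : ℕ} {F : ℝ → ℝ → ℝ}
    (hsm : ContDiffOn ℝ (k+1) (fun p : ℝ × ℝ => F p.1 p.2) Etil) :
    ∀ j ≤ k, ContDiffOn ℝ ((k - j : ℕ)) (Dfam F j) Etil := by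
  intro j
  induction j with
  | zero =>
    intro _
    have h1 : ContDiffOn ℝ (k : ℕ) (fderiv ℝ (fun p : ℝ × ℝ => F p.1 p.2)) Etil := by
      apply hsm.fderiv_of_isOpen isOpen_Etil
      exact_mod_cast le_refl (k+1)
    exact h1.clm_apply contDiffOn_const
  | succ j ih =>
    intro hj
    have hj' : j ≤ k := by omega
    have h0 := ih hj'
    have heq : (k - j : ℕ) = (k - (j+1)) + 1 := by omega
    rw [heq] at h0
    have h1 : ContDiffOn ℝ ((k - (j+1) : ℕ)) (fderiv ℝ (Dfam F j)) Etil := by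
      apply h0.fderiv_of_isOpen isOpen_Etil
      exact_mod_cast le_refl ((k - (j+1)) + 1)
    have h2 := h1.clm_apply (contDiffOn_const (c := ((1:ℝ), (0:ℝ))))
    exact h2
lemma Dfam_continuousOn {k : ℕ} {F : ℝ → ℝ → ℝ}
    (hsm : ContDiffOn ℝ (k+1) (fun p : ℝ × ℝ => F p.1 p.2) Etil) :
    ∀ j ≤ k, ContinuousOn (Dfam F j) Etil := fun j hj =>
  (Dfam_contDiffOn hsm j hj).continuousOn

lemma Dfam_hasDerivAt_fst {k : ℕ} {F : ℝ → ℝ → ℝ}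
    (hsm : ContDiffOn ℝ (k+1) (fun p : ℝ × ℝ => F p.1 p.2) Etil) :
    ∀ j < k, ∀ x r : ℝ, r < x →
      HasDerivAt (fun x' => Dfam F j (x', r)) (Dfam F (j+1) (x, r)) x := by
  intro j hj x r hrx
  have hmem : ((x, r) : ℝ × ℝ) ∈ Etil := hrx
  have h0 := Dfam_contDiffOn hsm j (le_of_lt hj)
  have hat : DifferentiableAt ℝ (Dfam F j) (x, r) := by
    apply (h0.differentiableOn ?_).differentiableAt (isOpen_Etil.mem_nhds hmem)
    have : (1:ℕ) ≤ k - j := by omega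
    exact_mod_cast (Nat.one_le_iff_ne_zero.1 this)
  have h1 : HasDerivAt (fun x' : ℝ => ((x', r) : ℝ × ℝ)) (1, 0) x :=
    (hasDerivAt_id x).prodMk (hasDerivAt_const x r)
  have h2 := hat.hasFDerivAt.comp_hasDerivAt x h1
  simpa [Dfam, Function.comp_def] using h2

lemma Dfam_hasDerivAt_snd {k : ℕ} {F : ℝ → ℝ → ℝ}
    (hsm : ContDiffOn ℝ (k+1) (fun p : ℝ × ℝ => F p.1 p.2) Etil) :
    ∀ x r : ℝ, r < x →
      HasDerivAt (fun r' => F x r') (Dfam F 0 (x, r)) r := by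
  intro x r hrx
  have hmem : ((x, r) : ℝ × ℝ) ∈ Etil := hrx
  have hat : DifferentiableAt ℝ (fun p : ℝ × ℝ => F p.1 p.2) (x, r) := by
    apply (hsm.differentiableOn ?_).differentiableAt (isOpen_Etil.mem_nhds hmem)
    exact_mod_cast Nat.succ_ne_zero k
  have h1 : HasDerivAt (fun r' : ℝ => ((x, r') : ℝ × ℝ)) (0, 1) r :=
    (hasDerivAt_const r x).prodMk (hasDerivAt_id r)
  have h2 := hat.hasFDerivAt.comp_hasDerivAt r h1
  simpa [Dfam, Function.comp_def] using h2
set_option maxHeartbeats 1000000 in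
lemma taylor_diff_est {n : ℕ} {t η M' : ℝ} (hη : 0 < η)
    (I : ℕ → ℝ → ℝ)
    (hderiv : ∀ j ≤ n, ∀ x ∈ Metric.ball t η, HasDerivAt (I j) (I (j+1) x) x)
    (hbound : ∀ x ∈ Metric.ball t η, |I (n+1) x| ≤ M') :
    ∀ u v : ℝ, u ∈ Metric.ball t η → v ∈ Metric.ball t η →
      |(I 0 u - ∑ i ∈ Finset.range (n+1), (I i t / (i.factorial : ℝ)) * (u - t)^i)
        - (I 0 v - ∑ i ∈ Finset.range (n+1), (I i t / (i.factorial : ℝ)) * (v - t)^i)|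
        ≤ M' * (max |u - t| |v - t|)^n * |u - v| := by
  have htball : t ∈ Metric.ball t η := Metric.mem_ball_self hη
  have hM'0 : 0 ≤ M' := le_trans (abs_nonneg _) (hbound t htball)
  set R : ℕ → ℝ → ℝ := fun j x =>
    I j x - ∑ i ∈ Finset.range (n+1-j), (I (j+i) t / (i.factorial : ℝ)) * (x - t)^i
    with hRdef
  have hRd : ∀ j ≤ n, ∀ x ∈ Metric.ball t η, HasDerivAt (R j) (R (j+1) x) x := by
    intro j hj x hx
    have hsum : HasDerivAt
        (fun y => ∑ i ∈ Finset.range (n+1-j), (I (j+i) t / (i.factorial : ℝ)) * (y - t)^i)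
        (∑ i ∈ Finset.range (n+1-j),
          (I (j+i) t / (i.factorial : ℝ)) * ((i : ℝ) * (x - t)^(i-1) * 1)) x := by
      apply HasDerivAt.fun_sum
      intro i _
      exact (((hasDerivAt_id x).sub_const t).pow i).const_mul _
    have hre : (∑ i ∈ Finset.range (n+1-j),
          (I (j+i) t / (i.factorial : ℝ)) * ((i : ℝ) * (x - t)^(i-1) * 1))
        = ∑ i ∈ Finset.range (n+1-(j+1)), (I ((j+1)+i) t / (i.factorial : ℝ)) * (x - t)^i := by
      have h1 : n + 1 - j = (n - j) + 1 := by omega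
      have h2 : n + 1 - (j+1) = n - j := by omega
      rw [h1, h2, Finset.sum_range_succ']
      simp only [Nat.cast_zero, zero_mul, mul_zero, add_zero]
      apply Finset.sum_congr rfl
      intro i _
      have hfac : ((i+1).factorial : ℝ) = (i+1) * (i.factorial : ℝ) := by
        push_cast [Nat.factorial_succ]; ring
      have hip : (i : ℕ) + 1 - 1 = i := by omega
      rw [hip, hfac]
      have h3 : j + (i + 1) = j + 1 + i := by omega
      rw [h3]
      have hfi : (i.factorial : ℝ) ≠ 0 := by positivity
      push_cast
      field_simp
    have := (hderiv j hj x hx).sub (hre ▸ hsum)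
    exact this
  have chain : ∀ m : ℕ, m ≤ n+1 → ∀ x ∈ Metric.ball t η,
      |R (n+1-m) x| ≤ M' * |x - t|^m := by
    intro m
    induction m with
    | zero =>
      intro _ x hx
      simpa [hRdef] using hbound x hx
    | succ m ih =>
      intro hm x hx
      have hmn : m ≤ n + 1 := by omega
      have hj : n + 1 - (m+1) = n - m := by omega
      have hj1 : n + 1 - m = (n - m) + 1 := by omega
      have hjn : n - m ≤ n := by omega
      have hRt : R (n - m) t = 0 := by
        simp only [hRdef]
        have h1 : n + 1 - (n - m) = (n - (n-m)) + 1 := by omega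
        rw [h1, Finset.sum_range_succ']
        simp [Finset.sum_eq_zero, zero_pow]
      have hkey : |R (n-m) x - R (n-m) t| ≤ (M' * |x - t|^m) * |x - t| := by
        apply mvt_two (f' := fun y => R ((n-m)+1) y) hx htball
        · intro y hy
          exact hRd (n-m) hjn y hy
        · intro y hy hymax
          have h4 : |y - t| ≤ |x - t| := by
            simpa [abs_nonneg] using hymax
          have h5 := ih hmn y hy
          rw [show (n - m) + 1 = n + 1 - m by omega] at *
          calc |R (n+1-m) y| ≤ M' * |y - t|^m := h5
          _ ≤ M' * |x - t|^m := by
              apply mul_le_mul_of_nonneg_left _ hM'0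
              exact pow_le_pow_left₀ (abs_nonneg _) h4 m
      rw [hRt, sub_zero] at hkey
      rw [hj]
      calc |R (n-m) x| ≤ (M' * |x - t|^m) * |x - t| := hkey
      _ = M' * |x - t|^(m+1) := by ring
  intro u v hu hv
  have h0 : ∀ x : ℝ, R 0 x = I 0 x - ∑ i ∈ Finset.range (n+1),
      (I i t / (i.factorial : ℝ)) * (x - t)^i := by
    intro x; simp [hRdef]
  rw [← h0, ← h0]
  apply mvt_two (f' := fun y => R 1 y) hu hv
  · intro y hy; exact hRd 0 (Nat.zero_le n) y hy
  · intro y hy hymax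
    have h5 : |R 1 y| ≤ M' * |y - t|^n := by
      have := chain n (by omega) y hy
      rwa [show n + 1 - n = 1 by omega] at this
    calc |R 1 y| ≤ M' * |y - t|^n := h5
    _ ≤ M' * (max |u - t| |v - t|)^n := by
        apply mul_le_mul_of_nonneg_left _ hM'0
        exact pow_le_pow_left₀ (abs_nonneg _) hymax n
set_option maxHeartbeats 2000000

/-- Lemma 6.1: bound on the far-from-`t` part of `I₂,₁`. -/
theorem bound_I21_far
    (d l : ℝ) (hd : d ∈ Set.Ioo (0:ℝ) 1) (hl : 0 < l)
    (F : ℝ → ℝ → ℝ) (hF : SmoothVariation d ((⌊l + d⌋).toNat + 2) F)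
    (f : ℝ → ℝ → ℝ) (hf : f = pderiv2 0 1 F)
    (g : ℝ → ℝ) (hg : CadlagOn g)
    (t : ℝ) (ht : t ∈ Set.Ioo (0:ℝ) 1) (ε : ℝ) (hε : ε ∈ Set.Ioo (0:ℝ) l)
    (P : Polynomial ℝ) (hP : (P.natDegree : ℤ) ≤ ⌊l⌋)
    (C₀ : ℝ) (hC₀ : 0 < C₀)
    (hgP : ∀ r ∈ Set.Icc (0:ℝ) 1, |g r - P.eval r| ≤ C₀ * |r - t| ^ (l - ε)) :
    ∀ h ∈ Set.Ioo (0:ℝ) t, ∃ P3 : Polynomial ℝ, (P3.natDegree : ℤ) ≤ ⌊l + d⌋ ∧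
      ∃ C > 0, ∃ h' > 0,
        ∀ u v : ℝ, u ∈ Metric.ball t h' → v ∈ Metric.ball t h' → v < u →
          |(∫ r in (0:ℝ)..(t - h), (f u r - f v r) * (g r - P.eval r))
              - P3.eval u + P3.eval v| ≤
            C * F u v * (|u - t| ^ (l - ε) + |v - t| ^ (l - ε)) := by
  obtain ⟨hd0, hd1⟩ := hd
  obtain ⟨ht0, ht1⟩ := ht
  obtain ⟨hε0, hεl⟩ := hε
  intro h hh
  obtain ⟨hh0, hht⟩ := hh
  subst hf
  set n := (⌊l + d⌋).toNat with hn
  have hld : (0:ℝ) < l + d := by linarith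
  have hfloor0 : (0:ℤ) ≤ ⌊l + d⌋ := Int.floor_nonneg.2 (le_of_lt hld)
  have hncast : (n : ℝ) = (⌊l + d⌋ : ℤ) := by
    rw [hn]; exact_mod_cast congrArg (fun z : ℤ => (z : ℝ)) (Int.toNat_of_nonneg hfloor0)
  have hnlb : l + d - 1 ≤ (n : ℝ) := by
    rw [hncast]; linarith [Int.sub_one_lt_floor (l + d)]
  have hsm : ContDiffOn ℝ (((n+1)+1 : ℕ)) (fun p : ℝ × ℝ => F p.1 p.2) Etil := by
    have h1 := hF.mem.smooth
    have h2 : (⌊l + d⌋).toNat + 2 = (n+1)+1 := by omega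
    rw [h2] at h1; exact h1
  -- geometry
  set a := t - h with ha
  have ha0 : 0 < a := by simp only [ha]; linarith
  have ha1 : a < 1 := by simp only [ha]; linarith
  set η := h / 2 with hη
  have hη0 : 0 < η := by positivity
  have hrect : ∀ x r : ℝ, x ∈ Metric.closedBall t η → r ∈ Set.Icc 0 a → r < x := by
    intro x r hx hr
    have h1 : |x - t| ≤ η := by simpa [Real.dist_eq] using hx
    have h2 := (abs_le.1 h1).1
    have h3 := hr.2
    have e1 : a = t - h := ha
    have e2 : η = h / 2 := hη
    linarith
  -- the function w
  set w : ℝ → ℝ := fun r => g r - P.eval r with hw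
  have hwb : ∀ r ∈ Set.Icc (0:ℝ) a, |w r| ≤ C₀ := by
    intro r hr
    have hr1 : r ∈ Set.Icc (0:ℝ) 1 := ⟨hr.1, by have := hr.2; simp only [ha] at this; linarith⟩
    have h1 := hgP r hr1
    have h2 : |r - t| ≤ 1 := by
      rw [abs_le]; constructor <;> [linarith [hr1.1]; linarith [hr1.2]]
    have h3 : |r - t| ^ (l - ε) ≤ 1 :=
      Real.rpow_le_one (abs_nonneg _) h2 (by linarith)
    calc |w r| ≤ C₀ * |r - t| ^ (l - ε) := h1
    _ ≤ C₀ * 1 := mul_le_mul_of_nonneg_left h3 hC₀.le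
    _ = C₀ := mul_one _
  have hwm : AEStronglyMeasurable w (volume.restrict (Set.Ioc (0:ℝ) a)) := by
    have hG0 := cadlag_measurable g hg
    have h1 : AEStronglyMeasurable (fun r => g (max r 0) - P.eval r)
        (volume.restrict (Set.Ioc (0:ℝ) a)) :=
      ((hG0.sub P.continuous.measurable).aestronglyMeasurable)
    apply h1.congr
    filter_upwards [ae_restrict_mem measurableSet_Ioc] with r hr
    simp [hw, max_eq_left hr.1.le]
  -- uniform bounds for the Dfam family on the rectangle
  have hMex : ∀ j : ℕ, ∃ Mj : ℝ, 0 ≤ Mj ∧ (j ≤ n+1 →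
      ∀ x ∈ Metric.closedBall t η, ∀ r ∈ Set.Icc (0:ℝ) a, |Dfam F j (x, r)| ≤ Mj) := by
    intro j
    by_cases hj : j ≤ n+1
    · have hKc : IsCompact ((Metric.closedBall t η) ×ˢ (Set.Icc (0:ℝ) a)) :=
        (isCompact_closedBall t η).prod isCompact_Icc
      have hsubE : ((Metric.closedBall t η) ×ˢ (Set.Icc (0:ℝ) a)) ⊆ Etil := by
        rintro ⟨x, r⟩ ⟨hx, hr⟩
        exact hrect x r hx hr
      have hcont : ContinuousOn (Dfam F j) ((Metric.closedBall t η) ×ˢ (Set.Icc (0:ℝ) a)) :=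
        (Dfam_continuousOn hsm j hj).mono hsubE
      obtain ⟨Mj, hMj⟩ := hKc.exists_bound_of_continuousOn hcont
      refine ⟨max Mj 0, le_max_right _ _, fun _ x hx r hr => ?_⟩
      calc |Dfam F j (x, r)| ≤ Mj := by
            simpa [Real.norm_eq_abs] using hMj (x, r) ⟨hx, hr⟩
      _ ≤ max Mj 0 := le_max_left _ _
    · exact ⟨0, le_rfl, fun hj' => absurd hj' hj⟩
  choose M hM0 hMb using hMex
  -- measurability and integrability of the integrands
  have hmeas : ∀ j ≤ n+1, ∀ x ∈ Metric.ball t η,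
      AEStronglyMeasurable (fun r => Dfam F j (x, r) * w r)
        (volume.restrict (Set.Ioc (0:ℝ) a)) := by
    intro j hj x hx
    have hsm1 : AEStronglyMeasurable (fun r => Dfam F j (x, r))
        (volume.restrict (Set.Ioc (0:ℝ) a)) := by
      apply ContinuousOn.aestronglyMeasurable ?_ measurableSet_Ioc
      apply (Dfam_continuousOn hsm j hj).comp
        (Continuous.continuousOn (continuous_const.prodMk continuous_id))
      intro r hr
      exact hrect x r (Metric.ball_subset_closedBall hx) ⟨hr.1.le, hr.2⟩
    exact hsm1.mul hwm
  have hint : ∀ j ≤ n+1, ∀ x ∈ Metric.ball t η,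
      IntervalIntegrable (fun r => Dfam F j (x, r) * w r) volume 0 a := by
    intro j hj x hx
    rw [intervalIntegrable_iff, uIoc_of_le ha0.le]
    apply Integrable.mono' (g := fun _ => M j * C₀)
    · exact integrableOn_const measure_Ioc_lt_top.ne
    · exact hmeas j hj x hx
    · filter_upwards [ae_restrict_mem measurableSet_Ioc] with r hr
      rw [Real.norm_eq_abs, abs_mul]
      apply mul_le_mul (hMb j hj x (Metric.ball_subset_closedBall hx) r ⟨hr.1.le, hr.2⟩)
        (hwb r ⟨hr.1.le, hr.2⟩) (abs_nonneg _) (hM0 j)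
  -- the parametrized integrals
  set I : ℕ → ℝ → ℝ := fun j x => ∫ r in (0:ℝ)..a, Dfam F j (x, r) * w r with hI
  have hIderiv : ∀ j ≤ n, ∀ x₀ ∈ Metric.ball t η, HasDerivAt (I j) (I (j+1) x₀) x₀ := by
    intro j hj x₀ hx₀
    have hε' : 0 < η - dist x₀ t := by
      have := Metric.mem_ball.1 hx₀; linarith
    have hsub2 : Metric.ball x₀ (η - dist x₀ t) ⊆ Metric.ball t η := by
      intro y hy
      rw [Metric.mem_ball] at *
      calc dist y t ≤ dist y x₀ + dist x₀ t := dist_triangle _ _ _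
      _ < (η - dist x₀ t) + dist x₀ t := by linarith
      _ = η := by ring
    have key := intervalIntegral.hasDerivAt_integral_of_dominated_loc_of_deriv_le
      (F := fun x r => Dfam F j (x, r) * w r)
      (F' := fun x r => Dfam F (j+1) (x, r) * w r)
      (bound := fun _ => M (j+1) * C₀) (a := (0:ℝ)) (b := a) (μ := volume) (x₀ := x₀)
      (Metric.ball_mem_nhds x₀ hε') ?_ ?_ ?_ ?_ ?_ ?_
    · exact key.2
    · filter_upwards [isOpen_ball.mem_nhds hx₀] with x hx
      rw [uIoc_of_le ha0.le]
      exact hmeas j (by omega) x hx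
    · exact hint j (by omega) x₀ hx₀
    · rw [uIoc_of_le ha0.le]
      exact hmeas (j+1) (by omega) x₀ hx₀
    · apply Filter.Eventually.of_forall
      intro r hr x hx
      rw [uIoc_of_le ha0.le] at hr
      have hxt : x ∈ Metric.closedBall t η :=
        Metric.ball_subset_closedBall (hsub2 hx)
      rw [Real.norm_eq_abs, abs_mul]
      exact mul_le_mul (hMb (j+1) (by omega) x hxt r ⟨hr.1.le, hr.2⟩)
        (hwb r ⟨hr.1.le, hr.2⟩) (abs_nonneg _) (hM0 (j+1))
    · exact intervalIntegrable_const
    · apply Filter.Eventually.of_forall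
      intro r hr x hx
      rw [uIoc_of_le ha0.le] at hr
      have hxt : x ∈ Metric.closedBall t η :=
        Metric.ball_subset_closedBall (hsub2 hx)
      have hrx : r < x := hrect x r hxt ⟨hr.1.le, hr.2⟩
      exact (Dfam_hasDerivAt_fst (k := n+1) hsm j (by omega) x r hrx).mul_const (w r)
  have hIbound : ∀ x ∈ Metric.ball t η, |I (n+1) x| ≤ M (n+1) * C₀ * a := by
    intro x hx
    have h1 : ∀ r ∈ Set.uIoc (0:ℝ) a, ‖Dfam F (n+1) (x, r) * w r‖ ≤ M (n+1) * C₀ := by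
      intro r hr
      rw [uIoc_of_le ha0.le] at hr
      rw [Real.norm_eq_abs, abs_mul]
      exact mul_le_mul (hMb (n+1) le_rfl x (Metric.ball_subset_closedBall hx) r ⟨hr.1.le, hr.2⟩)
        (hwb r ⟨hr.1.le, hr.2⟩) (abs_nonneg _) (hM0 (n+1))
    have h2 := intervalIntegral.norm_integral_le_of_norm_le_const h1
    calc |I (n+1) x| ≤ M (n+1) * C₀ * |a - 0| := by
          simpa [hI, Real.norm_eq_abs] using h2
    _ = M (n+1) * C₀ * a := by rw [sub_zero, abs_of_pos ha0]
  set M' := M (n+1) * C₀ * a with hM'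
  have hM'0 : 0 ≤ M' := by
    have := hM0 (n+1); positivity
  have hkey := taylor_diff_est (n := n) (t := t) hη0 I hIderiv hIbound
  -- the polynomial P3
  set P3 : Polynomial ℝ := ∑ i ∈ Finset.range (n+1),
    Polynomial.C (I i t / (i.factorial : ℝ)) * (Polynomial.X - Polynomial.C t)^i with hP3
  have hdeg : (P3.natDegree : ℤ) ≤ ⌊l + d⌋ := by
    have h1 : P3.natDegree ≤ n := by
      apply Polynomial.natDegree_sum_le_of_forall_le
      intro i hi
      calc (Polynomial.C (I i t / (i.factorial : ℝ)) *
            (Polynomial.X - Polynomial.C t)^i).natDegree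
          ≤ ((Polynomial.X - Polynomial.C t)^i : Polynomial ℝ).natDegree :=
            Polynomial.natDegree_C_mul_le _ _
      _ ≤ i * (Polynomial.X - Polynomial.C t).natDegree := Polynomial.natDegree_pow_le
      _ = i := by rw [Polynomial.natDegree_X_sub_C, mul_one]
      _ ≤ n := by have := Finset.mem_range.1 hi; omega
    calc (P3.natDegree : ℤ) ≤ (n : ℤ) := by exact_mod_cast h1
    _ = ⌊l + d⌋ := by rw [hn]; exact Int.toNat_of_nonneg hfloor0
  have heval : ∀ x : ℝ, P3.eval x = ∑ i ∈ Finset.range (n+1),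
      (I i t / (i.factorial : ℝ)) * (x - t)^i := by
    intro x
    rw [hP3, Polynomial.eval_finset_sum]
    apply Finset.sum_congr rfl
    intro i _
    simp
  -- lower bound on F
  set ε₁ := min ε (1 - d) / 2 with hε₁
  have hε₁0 : 0 < ε₁ := by
    have h1 : 0 < min ε (1 - d) := lt_min hε0 (by linarith)
    positivity
  have hε₁ε : ε₁ ≤ ε := by
    have := min_le_left ε (1 - d)
    simp only [hε₁]; linarith
  set d' := d + ε₁ with hd'
  have hd'1 : d' < 1 := by
    have := min_le_right ε (1 - d)
    simp only [hd', hε₁]; linarith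
  have hd'0 : 0 < d' := by simp only [hd']; linarith
  obtain ⟨c, hc, h₁, hh₁, hh₁le1, hlow⟩ :=
    F_lowerbound d ((⌊l + d⌋).toNat + 2) (by omega) F hF t d' (by simp only [hd']; linarith)
  -- the constants
  refine ⟨P3, hdeg, M' * 2 / c + 1, by positivity, min (min η h₁) (1/2), by positivity, ?_⟩
  intro u v hu hv hvu
  have huη : u ∈ Metric.ball t η := by
    apply Metric.ball_subset_ball (le_trans (min_le_left _ _) (min_le_left _ _)) hu
  have hvη : v ∈ Metric.ball t η := by
    apply Metric.ball_subset_ball (le_trans (min_le_left _ _) (min_le_left _ _)) hv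
  have hu₁ : u ∈ Metric.ball t h₁ := by
    apply Metric.ball_subset_ball (le_trans (min_le_left _ _) (min_le_right _ _)) hu
  have hv₁ : v ∈ Metric.ball t h₁ := by
    apply Metric.ball_subset_ball (le_trans (min_le_left _ _) (min_le_right _ _)) hv
  have hut2 : |u - t| < 1/2 := by
    have := Metric.mem_ball.1 hu
    rw [Real.dist_eq] at this
    calc |u - t| < min (min η h₁) (1/2) := this
    _ ≤ 1/2 := min_le_right _ _
  have hvt2 : |v - t| < 1/2 := by
    have := Metric.mem_ball.1 hv
    rw [Real.dist_eq] at this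
    calc |v - t| < min (min η h₁) (1/2) := this
    _ ≤ 1/2 := min_le_right _ _
  -- identification of the integral
  have hDeq : ∀ x ∈ Metric.ball t η, ∀ r ∈ Set.uIcc (0:ℝ) a,
      pderiv2 0 1 F x r = Dfam F 0 (x, r) := by
    intro x hx r hr
    rw [Set.uIcc_of_le ha0.le] at hr
    have hrx : r < x := hrect x r (Metric.ball_subset_closedBall hx) hr
    rw [pderiv2_01]
    exact (Dfam_hasDerivAt_snd hsm x r hrx).deriv
  have hIeq : (∫ r in (0:ℝ)..a, (pderiv2 0 1 F u r - pderiv2 0 1 F v r) * (g r - P.eval r))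
      = I 0 u - I 0 v := by
    have hcongr : (∫ r in (0:ℝ)..a, (pderiv2 0 1 F u r - pderiv2 0 1 F v r) * (g r - P.eval r))
        = ∫ r in (0:ℝ)..a, (Dfam F 0 (u, r) * w r - Dfam F 0 (v, r) * w r) := by
      apply intervalIntegral.integral_congr
      intro r hr
      show (pderiv2 0 1 F u r - pderiv2 0 1 F v r) * (g r - P.eval r)
        = Dfam F 0 (u, r) * w r - Dfam F 0 (v, r) * w r
      rw [hDeq u huη r hr, hDeq v hvη r hr]
      show _ = Dfam F 0 (u, r) * (g r - P.eval r) - Dfam F 0 (v, r) * (g r - P.eval r)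
      rw [sub_mul]
    rw [hcongr, intervalIntegral.integral_sub (hint 0 (by omega) u huη) (hint 0 (by omega) v hvη)]
  -- main estimate
  have hest := hkey u v huη hvη
  set amax := max |u - t| |v - t| with hamax
  have hamaxnn : 0 ≤ amax := le_trans (abs_nonneg _) (le_max_left _ _)
  have hamax0 : 0 < amax := by
    rcases eq_or_lt_of_le hamaxnn with heq | hlt
    · exfalso
      have h1 : |u - t| ≤ 0 := heq ▸ le_max_left _ _
      have h2 : |v - t| ≤ 0 := heq ▸ le_max_right _ _
      have h3 : u = t := by have := abs_nonneg (u - t); have := abs_eq_zero.1 (le_antisymm h1 (abs_nonneg _)); linarith [sub_eq_zero.1 this]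
      have h4 : v = t := by have := abs_eq_zero.1 (le_antisymm h2 (abs_nonneg _)); linarith [sub_eq_zero.1 this]
      rw [h3, h4] at hvu; exact lt_irrefl t hvu
    · exact hlt
  have hamax1 : amax ≤ 1 := by
    rcases max_cases |u - t| |v - t| with ⟨heq, _⟩ | ⟨heq, _⟩ <;> rw [hamax, heq] <;> linarith
  have hs0 : 0 < u - v := by linarith
  have hsle : u - v ≤ 2 * amax := by
    have h1 : u - v ≤ |u - t| + |v - t| := by
      calc u - v = (u - t) + (t - v) := by ring
      _ ≤ |u - t| + |t - v| := add_le_add (le_abs_self _) (le_abs_self _)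
      _ = |u - t| + |v - t| := by rw [abs_sub_comm t v]
    calc u - v ≤ |u - t| + |v - t| := h1
    _ ≤ amax + amax := add_le_add (le_max_left _ _) (le_max_right _ _)
    _ = 2 * amax := by ring
  have hFlow := hlow u v hu₁ hv₁ hvu
  have hFuv : 0 < F u v := hF.mem.pos (u, v) hvu
  -- rewrite goal
  rw [hIeq, heval u, heval v]
  have hgoal_eq : I 0 u - I 0 v
      - (∑ i ∈ Finset.range (n+1), (I i t / (i.factorial : ℝ)) * (u - t)^i)
      + (∑ i ∈ Finset.range (n+1), (I i t / (i.factorial : ℝ)) * (v - t)^i)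
      = (I 0 u - ∑ i ∈ Finset.range (n+1), (I i t / (i.factorial : ℝ)) * (u - t)^i)
      - (I 0 v - ∑ i ∈ Finset.range (n+1), (I i t / (i.factorial : ℝ)) * (v - t)^i) := by
    ring
  rw [hgoal_eq]
  -- chain of inequalities
  have habs_uv : |u - v| = u - v := abs_of_pos hs0
  have step1 : |(I 0 u - ∑ i ∈ Finset.range (n+1), (I i t / (i.factorial : ℝ)) * (u - t)^i)
      - (I 0 v - ∑ i ∈ Finset.range (n+1), (I i t / (i.factorial : ℝ)) * (v - t)^i)|
      ≤ M' * amax^n * (u - v) := by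
    rw [← habs_uv]; exact hest
  -- scalar manipulations with rpow
  have hsplit : (u - v) = (u - v) ^ (1 - d') * (u - v) ^ d' := by
    rw [← Real.rpow_add hs0]
    norm_num
  have ht2 : (u - v) ^ (1 - d') ≤ (2 * amax) ^ (1 - d') :=
    Real.rpow_le_rpow hs0.le hsle (by linarith)
  have ht3 : (2 * amax) ^ (1 - d') = 2 ^ (1 - d') * amax ^ (1 - d') :=
    Real.mul_rpow (by norm_num) hamaxnn
  have ht4 : (2:ℝ) ^ (1 - d') ≤ 2 := by
    calc (2:ℝ) ^ (1 - d') ≤ 2 ^ (1:ℝ) :=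
      Real.rpow_le_rpow_of_exponent_le one_le_two (by linarith)
    _ = 2 := Real.rpow_one 2
  have ht5 : amax ^ (n:ℝ) * amax ^ (1 - d') = amax ^ ((n:ℝ) + (1 - d')) :=
    (Real.rpow_add hamax0 _ _).symm
  have ht6 : amax ^ ((n:ℝ) + (1 - d')) ≤ amax ^ (l - ε) := by
    apply Real.rpow_le_rpow_of_exponent_ge hamax0 hamax1
    have e3 : d' = d + ε₁ := hd'
    linarith
  have ht7 : amax ^ (l - ε) ≤ |u - t| ^ (l - ε) + |v - t| ^ (l - ε) := by
    rcases max_cases |u - t| |v - t| with ⟨heq, _⟩ | ⟨heq, _⟩ <;> rw [hamax, heq]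
    · exact le_add_of_nonneg_right (Real.rpow_nonneg (abs_nonneg (v - t)) (l - ε))
    · exact le_add_of_nonneg_left (Real.rpow_nonneg (abs_nonneg (u - t)) (l - ε))
  have hpow_eq : amax^n = amax ^ (n:ℝ) := (Real.rpow_natCast amax n).symm
  have hrd'nn : (0:ℝ) ≤ (u - v) ^ d' := Real.rpow_nonneg hs0.le _
  have hrFc : (u - v) ^ d' ≤ F u v / c := by
    rw [le_div_iff₀ hc]
    calc (u - v) ^ d' * c = c * (u - v) ^ d' := by ring
    _ ≤ F u v := hFlow
  set S := |u - t| ^ (l - ε) + |v - t| ^ (l - ε) with hS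
  have hSnn : 0 ≤ S := by
    have := Real.rpow_nonneg (abs_nonneg (u - t)) (l - ε)
    have := Real.rpow_nonneg (abs_nonneg (v - t)) (l - ε)
    simp only [hS]; linarith
  have step2 : M' * amax^n * (u - v) ≤ M' * (2 * S) * ((u - v) ^ d') := by
    conv_lhs => rw [hsplit, hpow_eq]
    have hinner : amax ^ (n:ℝ) * (u - v) ^ (1 - d') ≤ 2 * S := by
      calc amax ^ (n:ℝ) * (u - v) ^ (1 - d')
          ≤ amax ^ (n:ℝ) * (2 * amax) ^ (1 - d') := by
            apply mul_le_mul_of_nonneg_left ht2 (Real.rpow_nonneg hamaxnn _)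
      _ = 2 ^ (1 - d') * (amax ^ (n:ℝ) * amax ^ (1 - d')) := by rw [ht3]; ring
      _ = 2 ^ (1 - d') * amax ^ ((n:ℝ) + (1 - d')) := by rw [ht5]
      _ ≤ 2 * S := by
            apply mul_le_mul ht4 (le_trans ht6 ht7) (Real.rpow_nonneg hamaxnn _) (by norm_num)
    calc M' * amax ^ (n:ℝ) * ((u - v) ^ (1 - d') * (u - v) ^ d')
        = M' * (amax ^ (n:ℝ) * (u - v) ^ (1 - d')) * ((u - v) ^ d') := by ring
    _ ≤ M' * (2 * S) * ((u - v) ^ d') := by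
          apply mul_le_mul_of_nonneg_right _ hrd'nn
          exact mul_le_mul_of_nonneg_left hinner hM'0
  have step3 : M' * (2 * S) * ((u - v) ^ d') ≤ M' * (2 * S) * (F u v / c) := by
    apply mul_le_mul_of_nonneg_left hrFc
    positivity
  have step4 : M' * (2 * S) * (F u v / c) ≤ (M' * 2 / c + 1) * F u v * S := by
    have h2 : 0 ≤ F u v * S := mul_nonneg hFuv.le hSnn
    calc M' * (2 * S) * (F u v / c) = (M' * 2 / c) * (F u v * S) := by ring
    _ ≤ (M' * 2 / c + 1) * (F u v * S) :=
        mul_le_mul_of_nonneg_right (le_add_of_nonneg_right zero_le_one) h2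
    _ = (M' * 2 / c + 1) * F u v * S := by ring
  calc |(I 0 u - ∑ i ∈ Finset.range (n+1), (I i t / (i.factorial : ℝ)) * (u - t)^i)
      - (I 0 v - ∑ i ∈ Finset.range (n+1), (I i t / (i.factorial : ℝ)) * (v - t)^i)|
      ≤ M' * amax^n * (u - v) := step1
  _ ≤ M' * (2 * S) * ((u - v) ^ d') := step2
  _ ≤ M' * (2 * S) * (F u v / c) := step3
  _ ≤ (M' * 2 / c + 1) * F u v * S := step4
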